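/- arXiv:2102.06742 — 2 statements merged into one kernel-verified Lean document; each statement's English description precedes it below -/
import Mathlib

section
/- Special case of Shapley–Folkman for segments through the origin: given vectors a_1, ..., a_m ∈ ℝ^d and x ∈ ∑_i conv{0, a_i}, there exists ū ∈ [0,1]^m with x = ∑_i ū_i a_i and at most d indices i for which ū_i ∉ {0,1}. -/
open Finset
open scoped Pointwise Classical

private lemma sf_reduce {d m : ℕ} (a : Fin m → (Fin d → ℝ)) :
    ∀ n : ℕ, ∀ u : Fin m → ℝ, (∀ i, u i ∈ Set.Icc (0 : ℝ) 1) →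
      (Finset.univ.filter (fun i => u i ≠ 0 ∧ u i ≠ 1)).card ≤ n →
      ∃ v : Fin m → ℝ, (∀ i, v i ∈ Set.Icc (0 : ℝ) 1) ∧
        ∑ i, v i • a i = ∑ i, u i • a i ∧
        (Finset.univ.filter (fun i => v i ≠ 0 ∧ v i ≠ 1)).card ≤ d := by
  intro n
  induction n with
  | zero =>
    intro u hu hcard
    exact ⟨u, hu, rfl, le_trans (Nat.le_of_eq (Nat.le_zero.mp hcard)) (Nat.zero_le d)⟩
  | succ n ih =>
    intro u hu hcard
    set F : Finset (Fin m) := Finset.univ.filter (fun i => u i ≠ 0 ∧ u i ≠ 1) with hF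
    by_cases hd : F.card ≤ d
    · exact ⟨u, hu, rfl, hd⟩
    push_neg at hd
    -- the family (a i)_{i ∈ F} is linearly dependent
    have hdep : ¬ LinearIndependent ℝ (fun i : F => a i) := by
      intro hli
      have := hli.fintype_card_le_finrank
      rw [Module.finrank_fin_fun, Fintype.card_coe] at this
      omega
    rw [Fintype.not_linearIndependent_iff] at hdep
    obtain ⟨g, hgsum, i₁, hgi₁⟩ := hdep
    set c : Fin m → ℝ := fun i => if h : i ∈ F then g ⟨i, h⟩ else 0 with hc
    have hcF : ∀ i ∉ F, c i = 0 := fun i hi => dif_neg hi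
    have hcsum : ∑ i, c i • a i = 0 := by
      rw [← Finset.sum_subset F.subset_univ (fun i _ hi => by rw [hcF i hi, zero_smul])]
      rw [← Finset.sum_attach F (fun i => c i • a i), ← hgsum]
      exact Finset.sum_congr rfl (fun i _ => by rw [hc]; simp [dif_pos i.2])
    set S : Finset (Fin m) := F.filter (fun i => c i ≠ 0) with hS
    have hSne : S.Nonempty := ⟨i₁, Finset.mem_filter.mpr ⟨i₁.2, by
      rw [hc]; simpa [dif_pos i₁.2] using hgi₁⟩⟩
    set f : Fin m → ℝ := fun i => if 0 < c i then (1 - u i) / c i else u i / (-c i) with hf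
    set t : ℝ := S.inf' hSne f with ht
    -- open bounds on fractional coordinates
    have hopen : ∀ i ∈ F, 0 < u i ∧ u i < 1 := by
      intro i hi
      rw [hF, Finset.mem_filter] at hi
      exact ⟨lt_of_le_of_ne (hu i).1 (Ne.symm hi.2.1), lt_of_le_of_ne (hu i).2 hi.2.2⟩
    have hfpos : ∀ i ∈ S, 0 < f i := by
      intro i hi
      rw [hS, Finset.mem_filter] at hi
      obtain ⟨hiF, hci⟩ := hi
      obtain ⟨h0, h1⟩ := hopen i hiF
      rw [hf]
      by_cases hpos : 0 < c i
      · simp only [hpos, if_true]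
        exact div_pos (by linarith) hpos
      · simp only [hpos, if_false]
        exact div_pos h0 (by rcases lt_or_gt_of_ne hci with h | h <;> [linarith; exact absurd h hpos])
    have ht0 : 0 ≤ t := le_of_lt ((Finset.lt_inf'_iff hSne).mpr hfpos)
    have htle : ∀ i ∈ S, t ≤ f i := fun i hi => Finset.inf'_le f hi
    set v : Fin m → ℝ := fun i => u i + t * c i with hv
    -- coordinates with c i = 0 are unchanged
    have hvc0 : ∀ i, c i = 0 → v i = u i := fun i h => by rw [hv]; simp [h]
    -- membership in S for c i ≠ 0
    have hmemS : ∀ i, c i ≠ 0 → i ∈ S := by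
      intro i h
      rcases Finset.mem_filter.mp (show i ∈ F from by
        by_contra hiF; exact h (hcF i hiF)) with _
      exact Finset.mem_filter.mpr ⟨by by_contra hiF; exact h (hcF i hiF), h⟩
    have hvIcc : ∀ i, v i ∈ Set.Icc (0 : ℝ) 1 := by
      intro i
      by_cases h : c i = 0
      · rw [hvc0 i h]; exact hu i
      have hiS := hmemS i h
      have hiF : i ∈ F := (Finset.mem_filter.mp hiS).1
      obtain ⟨h0, h1⟩ := hopen i hiF
      have hti := htle i hiS
      rw [hv]
      rcases lt_or_gt_of_ne h with hneg | hpos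
      · constructor
        · have : f i * c i ≤ t * c i := by
            apply mul_le_mul_of_nonpos_right hti (le_of_lt hneg)
          have hfi : f i * c i = -u i := by
            simp only [hf]; rw [if_neg (asymm hneg), div_mul_eq_mul_div, div_eq_iff (neg_ne_zero.mpr h)]; ring
          simp only [Set.mem_Icc] at *
          nlinarith
        · have : t * c i ≤ 0 := mul_nonpos_of_nonneg_of_nonpos ht0 (le_of_lt hneg)
          simp only [Set.mem_Icc] at *
          linarith
      · constructor
        · have : 0 ≤ t * c i := mul_nonneg ht0 (le_of_lt hpos)
          simp only [Set.mem_Icc] at *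
          linarith
        · have : t * c i ≤ f i * c i := mul_le_mul_of_nonneg_right hti (le_of_lt hpos)
          have hfi : f i * c i = 1 - u i := by
            rw [hf]; simp only [if_pos hpos]
            field_simp
          simp only [Set.mem_Icc] at *
          linarith
    have hvsum : ∑ i, v i • a i = ∑ i, u i • a i := by
      have : ∀ i, v i • a i = u i • a i + t • (c i • a i) := by
        intro i; rw [hv, add_smul, mul_smul]
      simp_rw [this, Finset.sum_add_distrib, ← Finset.smul_sum, hcsum, smul_zero, add_zero]
    -- the minimizing index leaves the fractional set
    obtain ⟨i₀, hi₀S, hi₀⟩ := Finset.exists_mem_eq_inf' hSne f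
    have hci₀ : c i₀ ≠ 0 := (Finset.mem_filter.mp hi₀S).2
    have hvi₀ : v i₀ = 0 ∨ v i₀ = 1 := by
      have htf : t = f i₀ := by rw [ht, hi₀]
      show u i₀ + t * c i₀ = 0 ∨ u i₀ + t * c i₀ = 1
      rw [htf]
      rcases lt_or_gt_of_ne hci₀ with hneg | hpos
      · left
        simp only [hf]; rw [if_neg (asymm hneg)]
        have : u i₀ / -c i₀ * c i₀ = -u i₀ := by
          rw [div_mul_eq_mul_div, div_eq_iff (neg_ne_zero.mpr hci₀)]; ring
        linarith
      · right
        simp only [hf]; rw [if_pos hpos]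
        have : (1 - u i₀) / c i₀ * c i₀ = 1 - u i₀ := div_mul_cancel₀ _ hci₀
        linarith
    have hsub : (Finset.univ.filter (fun i => v i ≠ 0 ∧ v i ≠ 1)) ⊆ F.erase i₀ := by
      intro i hi
      rw [Finset.mem_filter] at hi
      obtain ⟨-, hv0, hv1⟩ := hi
      have hiF : i ∈ F := by
        by_contra hiF
        have h01 : u i = 0 ∨ u i = 1 := by
          rw [hF, Finset.mem_filter] at hiF
          push_neg at hiF
          by_cases h : u i = 0
          · exact Or.inl h
          · exact Or.inr (hiF (Finset.mem_univ i) h)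
        have heq := hvc0 i (hcF i hiF)
        rcases h01 with h | h
        · exact hv0 (heq.trans h)
        · exact hv1 (heq.trans h)
      refine Finset.mem_erase.mpr ⟨?_, hiF⟩
      rintro rfl
      rcases hvi₀ with h | h
      · exact hv0 h
      · exact hv1 h
    have hcard' : (Finset.univ.filter (fun i => v i ≠ 0 ∧ v i ≠ 1)).card ≤ n := by
      have h1 := Finset.card_le_card hsub
      have h2 : (F.erase i₀).card < F.card :=
        Finset.card_erase_lt_of_mem (Finset.mem_filter.mp hi₀S).1
      omega
    obtain ⟨w, hw1, hw2, hw3⟩ := ih v hvIcc hcard'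
    exact ⟨w, hw1, hw2.trans hvsum, hw3⟩

/-- Shapley–Folkman for segments through the origin: if
`x ∈ ∑ᵢ conv{0, aᵢ}`, then `x = ∑ᵢ ūᵢ aᵢ` for some `ū ∈ [0,1]^m` with at most
`d` indices `i` for which `ūᵢ ∉ {0,1}`. -/
theorem shapley_folkman_segments {d m : ℕ} (a : Fin m → (Fin d → ℝ))
    (x : Fin d → ℝ)
    (hx : x ∈ ∑ i, convexHull ℝ ({0, a i} : Set (Fin d → ℝ))) :
    ∃ u : Fin m → ℝ, (∀ i, u i ∈ Set.Icc (0 : ℝ) 1) ∧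
      x = ∑ i, u i • a i ∧
      ∃ T : Finset (Fin m), T.card ≤ d ∧ ∀ i ∉ T, u i = 0 ∨ u i = 1 := by
  rw [Set.mem_fintype_sum] at hx
  obtain ⟨y, hy, hsum⟩ := hx
  -- extract coefficients
  have hcoef : ∀ i, ∃ t : ℝ, t ∈ Set.Icc (0 : ℝ) 1 ∧ y i = t • a i := by
    intro i
    have := hy i
    rw [convexHull_pair] at this
    obtain ⟨p, q, hp, hq, hpq, heq⟩ := this
    exact ⟨q, ⟨hq, by linarith⟩, by rw [← heq]; simp⟩
  choose u₀ hu₀ hy₀ using hcoef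
  have hx0 : x = ∑ i, u₀ i • a i := by
    rw [← hsum]; exact Finset.sum_congr rfl (fun i _ => hy₀ i)
  obtain ⟨v, hv1, hv2, hv3⟩ := sf_reduce a (Finset.univ.filter
    (fun i => u₀ i ≠ 0 ∧ u₀ i ≠ 1)).card u₀ hu₀ le_rfl
  refine ⟨v, hv1, by rw [hx0, ← hv2], Finset.univ.filter (fun i => v i ≠ 0 ∧ v i ≠ 1), hv3, ?_⟩
  intro i hi
  rw [Finset.mem_filter] at hi
  push_neg at hi
  by_cases h : v i = 0
  · exact Or.inl h
  · exact Or.inr (hi (Finset.mem_univ i) h)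
end

section
/- Perturbation sandwich bound: consider p(δ) := inf { f(z) : Xw = z + δ, w ∈ C } for a constraint set C ⊆ ℝ^m, and a rank-r approximation X = X_r + ΔX. If w*_r attains p_r(0) (the problem with X_r) with Lagrange dual variable ν*_r for the equality constraint, and w*, ν* attain the problem with X, then p(0) − ν*ᵀ ΔX w*_r ≤ p_r(0) ≤ p(0) − ν*_rᵀ ΔX w*, assuming weak duality holds with the stated multipliers. -/
open Matrix

/-- Perturbation sandwich bound. With `p(δ) = inf {f(z) : Xw = z + δ, w ∈ C}`
and `p_r(δ)` the analogous value for the rank-`r` part `X_r` of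
`X = X_r + ΔX`: if `w*_r` attains `p_r(0)` with dual variable `ν*_r`
(weak duality in the perturbation: `p_r(δ) ≥ p_r(0) − ν*_rᵀδ`), and `w*, ν*`
are the corresponding solutions for `X`, then
`p(0) − ν*ᵀ ΔX w*_r ≤ p_r(0) ≤ p(0) − ν*_rᵀ ΔX w*`. -/
theorem perturbation_sandwich {n m : ℕ}
    (f : (Fin n → ℝ) → ℝ) (C : Set (Fin m → ℝ))
    (X Xr ΔX : Matrix (Fin n) (Fin m) ℝ) (hX : X = Xr + ΔX)
    -- the perturbed optimal values (z = Xw − δ along the equality constraint)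
    (p pr : (Fin n → ℝ) → ℝ)
    (hp : ∀ δ, p δ = sInf {t : ℝ | ∃ w ∈ C, t = f (X.mulVec w - δ)})
    (hpr : ∀ δ, pr δ = sInf {t : ℝ | ∃ w ∈ C, t = f (Xr.mulVec w - δ)})
    (hbddp : ∀ δ, BddBelow {t : ℝ | ∃ w ∈ C, t = f (X.mulVec w - δ)})
    (hbddpr : ∀ δ, BddBelow {t : ℝ | ∃ w ∈ C, t = f (Xr.mulVec w - δ)})
    -- primal attainment
    (wr : Fin m → ℝ) (hwr : wr ∈ C) (hwropt : pr 0 = f (Xr.mulVec wr))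
    (w : Fin m → ℝ) (hw : w ∈ C) (hwopt : p 0 = f (X.mulVec w))
    -- weak duality with the stated multipliers
    (ν νr : Fin n → ℝ)
    (hdual : ∀ δ, p 0 - ν ⬝ᵥ δ ≤ p δ)
    (hdualr : ∀ δ, pr 0 - νr ⬝ᵥ δ ≤ pr δ) :
    p 0 - ν ⬝ᵥ ΔX.mulVec wr ≤ pr 0 ∧ pr 0 ≤ p 0 - νr ⬝ᵥ ΔX.mulVec w := by
  have h1 : p (ΔX.mulVec wr) ≤ pr 0 := by
    rw [hwropt, hp]
    apply csInf_le (hbddp _)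
    exact ⟨wr, hwr, by rw [hX]; simp [Matrix.add_mulVec]⟩
  have h2 : pr (-(ΔX.mulVec w)) ≤ p 0 := by
    rw [hwopt, hpr]
    apply csInf_le (hbddpr _)
    refine ⟨w, hw, ?_⟩
    rw [hX, Matrix.add_mulVec]
    ring_nf
  constructor
  · exact le_trans (hdual _) h1
  · have := hdualr (-(ΔX.mulVec w))
    simp only [dotProduct_neg, sub_neg_eq_add] at this
    linarith
end
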